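/- Let G be a loop-free digraph with n ≥ 1 vertices and weak separator number k ≥ 1. Then k ≤ dpw(G) ≤ crank(G) ≤ k·log₂(n/k) − 1 + k (in particular crank(G) = O(k·log(n/k))). -/

import Mathlib

open scoped Classical

variable {V : Type*}

/-- `b` is reachable from `a` by a (possibly empty) directed path staying inside `S`. -/
def ReachIn (E : V → V → Prop) (S : Finset V) (a b : V) : Prop :=
  Relation.ReflTransGen (fun x y => x ∈ S ∧ y ∈ S ∧ E x y) a b

/-- The induced subdigraph `G[S]` is strongly connected. -/
def StronglyConnIn (E : V → V → Prop) (S : Finset V) : Prop :=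
  ∀ a ∈ S, ∀ b ∈ S, ReachIn E S a b

/-- The induced subdigraph `G[S]` contains at least one edge. -/
def HasEdgeIn (E : V → V → Prop) (S : Finset V) : Prop :=
  ∃ a ∈ S, ∃ b ∈ S, E a b

/-- `G[S]` is acyclic: every strongly connected component of `G[S]` is trivial,
equivalently there is no edge lying on a closed walk inside `S`. -/
def AcyclicIn (E : V → V → Prop) (S : Finset V) : Prop :=
  ¬ ∃ a ∈ S, ∃ b ∈ S, E a b ∧ ReachIn E S b a

open Classical in
/-- The strongly connected component of `v` in the induced subdigraph `G[S]`. -/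
noncomputable def sccOf [DecidableEq V] (E : V → V → Prop) (S : Finset V) (v : V) : Finset V :=
  S.filter (fun u => ReachIn E S v u ∧ ReachIn E S u v)

open Classical in
/-- Fuel-based auxiliary function implementing the recursive definition of cycle rank. -/
noncomputable def crankAux [DecidableEq V] (E : V → V → Prop) : ℕ → Finset V → ℕ
  | 0, _ => 0
  | n + 1, S =>
    if AcyclicIn E S then 0
    else if StronglyConnIn E S then
      1 + sInf {m | ∃ v ∈ S, crankAux E n (S.erase v) = m}
    else
      S.sup (fun v => crankAux E n (sccOf E S v))

/-- The cycle rank of the digraph `(V, E)`. -/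
noncomputable def crank [DecidableEq V] [Fintype V] (E : V → V → Prop) : ℕ :=
  crankAux E (Fintype.card V) Finset.univ


/-- `S` is a weak balanced separator for `U`: every strongly connected component of
`G[U ∖ S]` contains at most `⌈|U ∖ S|/2⌉` vertices. -/
def IsWeakBalSep {V : Type*} [DecidableEq V] (E : V → V → Prop) (U S : Finset V) : Prop :=
  ∀ v ∈ U \ S, (sccOf E (U \ S) v).card ≤ ((U \ S).card + 1) / 2
/-- The minimum size of a weak balanced separator for `U`. -/
noncomputable def minWeakSep {V : Type*} [DecidableEq V] (E : V → V → Prop) (U : Finset V) : ℕ :=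
  sInf {c : ℕ | ∃ S : Finset V, S.card ≤ c ∧ IsWeakBalSep E U S}

/-- The weak separator number: the maximum over all `U ⊆ V` of the minimum size of a
weak balanced separator for `U`. -/
noncomputable def snum {V : Type*} [DecidableEq V] [Fintype V] (E : V → V → Prop) : ℕ :=
  Finset.univ.powerset.sup (minWeakSep E)
/-- `L` is a directed path decomposition of `(V, E)`: a sequence of bags covering all
vertices, such that `W_i ∩ W_k ⊆ W_j` for `i < j < k`, and each edge `(u,v)` either has
both endpoints in a common bag, or `u` occurs in a bag strictly before a bag containing `v`. -/
def IsDirPathDecomp {V : Type*} (E : V → V → Prop) (L : List (Finset V)) : Prop :=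
  (∀ v : V, ∃ W ∈ L, v ∈ W) ∧
  (∀ i j k : ℕ, i < j → j < k →
    ∀ (hi : i < L.length) (hj : j < L.length) (hk : k < L.length),
      ∀ v, v ∈ L.get ⟨i, hi⟩ → v ∈ L.get ⟨k, hk⟩ → v ∈ L.get ⟨j, hj⟩) ∧
  (∀ u v, E u v → (∃ W ∈ L, u ∈ W ∧ v ∈ W) ∨
      ∃ (i j : ℕ) (hi : i < L.length) (hj : j < L.length),
        i < j ∧ u ∈ L.get ⟨i, hi⟩ ∧ v ∈ L.get ⟨j, hj⟩)

/-- The directed pathwidth of `(V, E)`: the minimum, over all directed path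
decompositions, of (maximum bag size) − 1. -/
noncomputable def dpw {V : Type*} [Fintype V] (E : V → V → Prop) : ℕ :=
  sInf {w : ℕ | ∃ L : List (Finset V), IsDirPathDecomp E L ∧ ∀ W ∈ L, W.card ≤ w + 1}

section A
variable [DecidableEq V] {E : V → V → Prop} {S T : Finset V} {a b u v : V}

theorem reachIn_mono (hST : S ⊆ T) (h : ReachIn E S a b) : ReachIn E T a b := by
  induction h with
  | refl => exact .refl
  | tail _ h ih => exact ih.tail ⟨hST h.1, hST h.2.1, h.2.2⟩

theorem reachIn_trans {c : V} (h : ReachIn E S a b) (h' : ReachIn E S b c) : ReachIn E S a c :=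
  Relation.ReflTransGen.trans h h'

theorem mem_sccOf : u ∈ sccOf E S v ↔ u ∈ S ∧ ReachIn E S v u ∧ ReachIn E S u v := by
  simp [sccOf]

theorem sccOf_subset : sccOf E S v ⊆ S := Finset.filter_subset _ _

theorem mem_sccOf_self (hv : v ∈ S) : v ∈ sccOf E S v :=
  mem_sccOf.mpr ⟨hv, .refl, .refl⟩

theorem sccOf_mono (hST : S ⊆ T) : sccOf E S v ⊆ sccOf E T v := by
  intro u hu
  rw [mem_sccOf] at hu ⊢
  exact ⟨hST hu.1, reachIn_mono hST hu.2.1, reachIn_mono hST hu.2.2⟩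

theorem sccOf_eq_self (h : StronglyConnIn E S) (hv : v ∈ S) : sccOf E S v = S := by
  apply Finset.Subset.antisymm sccOf_subset
  intro u hu
  exact mem_sccOf.mpr ⟨hu, h v hv u hu, h u hu v hv⟩

theorem sccOf_ssubset (h : ¬ StronglyConnIn E S) (hv : v ∈ S) : sccOf E S v ⊂ S := by
  refine ⟨sccOf_subset, fun hsub => h ?_⟩
  intro a ha b hb
  have ha' := mem_sccOf.mp (hsub ha)
  have hb' := mem_sccOf.mp (hsub hb)
  exact reachIn_trans ha'.2.2 hb'.2.1

theorem acyclicIn_mono (hTS : T ⊆ S) (h : AcyclicIn E S) : AcyclicIn E T := by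
  rintro ⟨a, ha, b, hb, he, hr⟩
  exact h ⟨a, hTS ha, b, hTS hb, he, reachIn_mono hTS hr⟩

theorem nonempty_of_not_acyclic (h : ¬ AcyclicIn E S) : S.Nonempty := by
  rw [AcyclicIn, not_not] at h
  obtain ⟨a, ha, -⟩ := h
  exact ⟨a, ha⟩

theorem not_acyclic_of_mutual (hne : u ≠ v) (h1 : ReachIn E S u v) (h2 : ReachIn E S v u) :
    ¬ AcyclicIn E S := by
  rcases Relation.ReflTransGen.cases_head h1 with rfl | ⟨w, hw, hwv⟩
  · exact absurd rfl hne
  · exact fun hac => hac ⟨u, hw.1, w, hw.2.1, hw.2.2, reachIn_trans hwv h2⟩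

theorem crankAux_succ (n : ℕ) (S : Finset V) :
    crankAux E (n+1) S =
      (if AcyclicIn E S then 0
      else if StronglyConnIn E S then
        1 + sInf {m | ∃ v ∈ S, crankAux E n (S.erase v) = m}
      else S.sup (fun v => crankAux E n (sccOf E S v))) := rfl

/-- fuel step -/
theorem crankAux_step (n : ℕ) : ∀ S : Finset V, S.card ≤ n →
    crankAux E n S = crankAux E (n+1) S := by
  induction n with
  | zero =>
    intro S hS
    have hS0 : S = ∅ := Finset.card_eq_zero.mp (Nat.le_zero.mp hS)
    subst hS0
    have hac : AcyclicIn E (∅ : Finset V) := by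
      rintro ⟨a, ha, -⟩; exact absurd ha (Finset.notMem_empty a)
    simp [crankAux, hac]
  | succ n ih =>
    intro S hS
    rw [crankAux_succ, crankAux_succ]
    by_cases hac : AcyclicIn E S
    · simp [hac]
    by_cases hsc : StronglyConnIn E S
    · simp only [if_neg hac, if_pos hsc]
      congr 1
      congr 1
      ext m
      constructor
      · rintro ⟨w, hw, rfl⟩
        refine ⟨w, hw, (ih (S.erase w) ?_).symm⟩
        rw [Finset.card_erase_of_mem hw]; omega
      · rintro ⟨w, hw, rfl⟩
        refine ⟨w, hw, ih (S.erase w) ?_⟩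
        rw [Finset.card_erase_of_mem hw]; omega
    · simp only [if_neg hac, if_pos hsc, if_neg hsc]
      apply Finset.sup_congr rfl
      intro w hw
      apply ih
      have := Finset.card_lt_card (sccOf_ssubset hsc hw)
      omega

noncomputable def crk (E : V → V → Prop) (S : Finset V) : ℕ := crankAux E S.card S

theorem crankAux_eq_crk {n : ℕ} {S : Finset V} (h : S.card ≤ n) :
    crankAux E n S = crk E S := by
  obtain ⟨d, rfl⟩ : ∃ d, n = S.card + d := ⟨n - S.card, by omega⟩
  clear h
  induction d with
  | zero => rfl
  | succ d ih =>
    show crankAux E ((S.card + d) + 1) S = crk E S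
    rw [← crankAux_step (S.card + d) S (Nat.le_add_right _ _), ih]

end A

section B
variable [DecidableEq V] {E : V → V → Prop} {S T : Finset V} {a b u v : V}

theorem crk_acyclic (h : AcyclicIn E S) : crk E S = 0 := by
  rw [← crankAux_eq_crk (Nat.le_succ S.card), crankAux_succ, if_pos h]

theorem crk_sc_eq (hna : ¬ AcyclicIn E S) (hsc : StronglyConnIn E S) :
    crk E S = 1 + sInf {m | ∃ v ∈ S, crk E (S.erase v) = m} := by
  have hne : S.Nonempty := nonempty_of_not_acyclic hna
  have hpos : 0 < S.card := Finset.card_pos.mpr hne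
  obtain ⟨m, hm⟩ : ∃ m, S.card = m + 1 := ⟨S.card - 1, by omega⟩
  rw [crk, hm, crankAux_succ, if_neg hna, if_pos hsc]
  congr 2
  ext x
  constructor
  · rintro ⟨w, hw, rfl⟩
    exact ⟨w, hw, (crankAux_eq_crk (by rw [Finset.card_erase_of_mem hw]; omega)).symm⟩
  · rintro ⟨w, hw, rfl⟩
    exact ⟨w, hw, crankAux_eq_crk (by rw [Finset.card_erase_of_mem hw]; omega)⟩

theorem crk_nsc_eq (hna : ¬ AcyclicIn E S) (hnsc : ¬ StronglyConnIn E S) :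
    crk E S = S.sup (fun v => crk E (sccOf E S v)) := by
  have hne : S.Nonempty := nonempty_of_not_acyclic hna
  have hpos : 0 < S.card := Finset.card_pos.mpr hne
  obtain ⟨m, hm⟩ : ∃ m, S.card = m + 1 := ⟨S.card - 1, by omega⟩
  rw [crk, hm, crankAux_succ, if_neg hna, if_neg hnsc]
  apply Finset.sup_congr rfl
  intro w hw
  apply crankAux_eq_crk
  have := Finset.card_lt_card (sccOf_ssubset hnsc hw)
  omega

theorem crk_sc_le (hna : ¬ AcyclicIn E S) (hsc : StronglyConnIn E S) (hv : v ∈ S) :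
    crk E S ≤ 1 + crk E (S.erase v) := by
  rw [crk_sc_eq hna hsc]
  have : crk E (S.erase v) ∈ {m | ∃ v ∈ S, crk E (S.erase v) = m} := ⟨v, hv, rfl⟩
  exact Nat.add_le_add_left (Nat.sInf_le this) 1

theorem crk_sc_attained (hna : ¬ AcyclicIn E S) (hsc : StronglyConnIn E S) :
    ∃ v ∈ S, crk E S = 1 + crk E (S.erase v) := by
  have hne : S.Nonempty := nonempty_of_not_acyclic hna
  obtain ⟨v, hv⟩ := hne
  have hmem : sInf {m | ∃ v ∈ S, crk E (S.erase v) = m} ∈ {m | ∃ v ∈ S, crk E (S.erase v) = m} :=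
    Nat.sInf_mem ⟨crk E (S.erase v), v, hv, rfl⟩
  obtain ⟨w, hw, hweq⟩ := hmem
  exact ⟨w, hw, by rw [crk_sc_eq hna hsc, hweq]⟩

theorem singleton_acyclic (hlf : ∀ x, ¬ E x x) : AcyclicIn E ({v} : Finset V) := by
  rintro ⟨a, ha, c, hc, he, -⟩
  rw [Finset.mem_singleton] at ha hc
  subst ha; subst hc
  exact hlf _ he

theorem crk_lt_card (hlf : ∀ x, ¬ E x x) :
    ∀ S : Finset V, S.Nonempty → crk E S < S.card := by
  intro S
  induction S using Finset.strongInduction with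
  | _ S ih =>
    intro hne
    by_cases hac : AcyclicIn E S
    · rw [crk_acyclic hac]; exact Finset.card_pos.mpr hne
    by_cases hsc : StronglyConnIn E S
    · obtain ⟨w, hw, hweq⟩ := crk_sc_attained hac hsc
      rcases (S.erase w).eq_empty_or_nonempty with he | hne'
      · exfalso
        have : S = {w} := by
          apply Finset.eq_singleton_iff_unique_mem.mpr
          refine ⟨hw, fun x hx => ?_⟩
          by_contra hxw
          exact absurd (Finset.mem_erase.mpr ⟨hxw, hx⟩) (by rw [he]; exact Finset.notMem_empty x)
        exact hac (this ▸ singleton_acyclic hlf)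
      · have h1 := ih (S.erase w) (Finset.erase_ssubset hw) hne'
        have h2 : (S.erase w).card = S.card - 1 := Finset.card_erase_of_mem hw
        have h3 : 0 < S.card := Finset.card_pos.mpr hne
        omega
    · rw [crk_nsc_eq hac hsc]
      have hpos : 0 < S.card := Finset.card_pos.mpr hne
      rw [Finset.sup_lt_iff (by simpa using hpos)]
      intro w hw
      have hss := sccOf_ssubset hsc hw
      have := ih _ hss ⟨w, mem_sccOf_self hw⟩
      have := Finset.card_lt_card hss
      omega

theorem crk_le_sep (hlf : ∀ x, ¬ E x x) :
    ∀ S : Finset V, ∀ T : Finset V, ∀ M F : ℕ,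
    (∀ w ∈ S \ T, (sccOf E (S \ T) w).card ≤ M) →
    (∀ S' : Finset V, S'.Nonempty → S'.card ≤ M → crk E S' ≤ F) →
    crk E S ≤ (S ∩ T).card + F := by
  intro S
  induction S using Finset.strongInduction with
  | _ S ih =>
    intro T M F hM hF
    by_cases hac : AcyclicIn E S
    · rw [crk_acyclic hac]; exact Nat.zero_le _
    by_cases hsc : StronglyConnIn E S
    · rcases (S ∩ T).eq_empty_or_nonempty with h0 | ⟨v, hv⟩
      · -- S ∩ T = ∅, so S \ T = S and S is a single scc of card ≤ M
        have hST : S \ T = S := by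
          ext x
          simp only [Finset.mem_sdiff]
          constructor
          · exact fun h => h.1
          · intro hx
            refine ⟨hx, fun hxT => ?_⟩
            exact absurd (Finset.mem_inter.mpr ⟨hx, hxT⟩) (by rw [h0]; exact Finset.notMem_empty x)
        have hne : S.Nonempty := nonempty_of_not_acyclic hac
        obtain ⟨w, hw⟩ := hne
        have hcard : S.card ≤ M := by
          have := hM w (by rw [hST]; exact hw)
          rwa [hST, sccOf_eq_self hsc hw] at this
        calc crk E S ≤ F := hF S ⟨w, hw⟩ hcard
          _ ≤ (S ∩ T).card + F := Nat.le_add_left _ _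
      · have hvS : v ∈ S := (Finset.mem_inter.mp hv).1
        have hvT : v ∈ T := (Finset.mem_inter.mp hv).2
        have h1 : crk E S ≤ 1 + crk E (S.erase v) := crk_sc_le hac hsc hvS
        have hsd : (S.erase v) \ T = S \ T := by
          ext x
          simp only [Finset.mem_sdiff, Finset.mem_erase]
          constructor
          · rintro ⟨⟨-, hx⟩, hxT⟩; exact ⟨hx, hxT⟩
          · rintro ⟨hx, hxT⟩
            exact ⟨⟨fun h => hxT (h ▸ hvT), hx⟩, hxT⟩
        have h2 := ih (S.erase v) (Finset.erase_ssubset hvS) T M F (by rw [hsd]; exact hM) hF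
        have h3 : (S.erase v ∩ T) = (S ∩ T).erase v := by
          ext x
          simp only [Finset.mem_inter, Finset.mem_erase]
          tauto
        rw [h3, Finset.card_erase_of_mem hv] at h2
        have h4 : 0 < (S ∩ T).card := Finset.card_pos.mpr ⟨v, hv⟩
        omega
    · rw [crk_nsc_eq hac hsc]
      apply Finset.sup_le
      intro w hw
      have hss := sccOf_ssubset hsc hw
      have hsub : sccOf E S w \ T ⊆ S \ T := by
        intro x hx
        rw [Finset.mem_sdiff] at hx ⊢
        exact ⟨sccOf_subset hx.1, hx.2⟩
      have hM' : ∀ u ∈ sccOf E S w \ T, (sccOf E (sccOf E S w \ T) u).card ≤ M := by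
        intro u hu
        calc (sccOf E (sccOf E S w \ T) u).card
            ≤ (sccOf E (S \ T) u).card := Finset.card_le_card (sccOf_mono hsub)
          _ ≤ M := hM u (hsub hu)
      have := ih _ hss T M F hM' hF
      have hinter : (sccOf E S w ∩ T).card ≤ (S ∩ T).card :=
        Finset.card_le_card (Finset.inter_subset_inter sccOf_subset (Finset.Subset.refl T))
      omega

end B

noncomputable def DD (k m : ℕ) : ℝ :=
  if m ≤ k then (m:ℝ) - 1 else (k:ℝ) * Real.logb 2 ((m:ℝ)/(k:ℝ)) + ((k:ℝ) - 1)

theorem log_diff_le {w y : ℝ} (hw : 0 < w) (hy : 0 < y) :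
    y * (Real.log w - Real.log y) ≤ w - y := by
  have h := Real.log_le_sub_one_of_pos (div_pos hw hy)
  rw [Real.log_div hw.ne' hy.ne'] at h
  have : Real.log w - Real.log y ≤ w/y - 1 := h
  calc y * (Real.log w - Real.log y) ≤ y * (w/y - 1) := by
        exact mul_le_mul_of_nonneg_left this hy.le
    _ = w - y := by rw [mul_sub, mul_div_cancel₀ _ hy.ne', mul_one]

theorem fact1 {k : ℝ} (hk : 1 ≤ k) : Real.log 2 ≤ k * Real.log (1 + 1/k) := by
  have hk0 : 0 < k := by linarith
  set x := 1/k with hx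
  have hx0 : 0 < x := by positivity
  have hx1 : x ≤ 1 := by rw [hx]; rw [div_le_one hk0]; linarith
  have hkx : k * x = 1 := by rw [hx, mul_one_div, div_self hk0.ne']
  -- want : log (1+x) ≥ x * log 2, then multiply by k
  have key : x * Real.log 2 ≤ Real.log (1 + x) := by
    have h1x : (0:ℝ) < 1 + x := by linarith
    by_cases hcase : (1 + x) * Real.log 2 ≤ 1
    · -- log(1+x) ≥ x/(1+x) ≥ x log 2
      have h := log_diff_le (one_pos) h1x
      simp only [Real.log_one] at h
      -- (1+x) * (0 - log(1+x)) ≤ 1 - (1+x)  ⇒ (1+x) log(1+x) ≥ x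
      nlinarith [Real.log_nonneg (by linarith : (1:ℝ) ≤ 1 + x)]
    · push_neg at hcase
      have h := log_diff_le (by norm_num : (0:ℝ) < 2) h1x
      -- (1+x)(log 2 - log(1+x)) ≤ 2 - (1+x) = 1 - x
      nlinarith [Real.log_pos (by norm_num : (1:ℝ) < 2)]
  calc Real.log 2 = k * (x * Real.log 2) := by rw [← mul_assoc, hkx, one_mul]
    _ ≤ k * Real.log (1 + x) := mul_le_mul_of_nonneg_left key hk0.le

/-- main log inequality: for 1 ≤ k, k+1 ≤ c ≤ 3k :
    (c - k + 1) * log 2 ≤ 2 k log (c/k) -/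
theorem fact2 {k c : ℝ} (hk : 1 ≤ k) (hc1 : k + 1 ≤ c) (hc3 : c ≤ 3*k) :
    (c - k + 1) * Real.log 2 ≤ 2 * k * Real.log (c/k) := by
  have hk0 : 0 < k := by linarith
  set y := c/k with hy
  have hyc : c = k * y := by rw [hy, mul_div_cancel₀ _ hk0.ne']
  have hy1 : 1 + 1/k ≤ y := by
    rw [hy, le_div_iff₀ hk0, add_mul, one_mul, one_div, inv_mul_cancel₀ hk0.ne']
    linarith
  have hy3 : y ≤ 3 := by rw [hy, div_le_iff₀ hk0]; linarith
  have hy0 : 0 < y := by nlinarith [one_div_pos.mpr hk0]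
  have hL : (0:ℝ) < Real.log 2 := Real.log_pos (by norm_num)
  have target : c - k + 1 = k * (y - 1) + 1 := by rw [hyc]; ring
  rw [target]
  set y₁ : ℝ := 1 + 1/k with hy₁
  have hy₁0 : (0:ℝ) < y₁ := by positivity
  have hky₁ : k * y₁ = k + 1 := by
    rw [hy₁, mul_add, mul_one, mul_one_div, div_self hk0.ne']
  by_cases hcase : y * Real.log 2 ≤ 2
  · -- left endpoint
    have A := log_diff_le hy₁0 hy0  -- y (log y₁ - log y) ≤ y₁ - y
    have B := fact1 hk              -- log 2 ≤ k log y₁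
    have C : 0 ≤ (k*y - k - 1) * (2 - y * Real.log 2) := by
      apply mul_nonneg
      · nlinarith
      · linarith
    -- multiply goal by y
    rw [← mul_le_mul_iff_left₀ hy0]
    nlinarith [mul_le_mul_of_nonneg_left A (by positivity : (0:ℝ) ≤ 2*k),
               mul_le_mul_of_nonneg_left B (by positivity : (0:ℝ) ≤ 2*y)]
  · push_neg at hcase
    have A := log_diff_le (by norm_num : (0:ℝ) < 3) hy0 -- y (log 3 - log y) ≤ 3 - y
    have T3 : 0 ≤ 2*k*Real.log 3 - (2*k+1) * Real.log 2 := by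
      have h94 : Real.log 2 ≤ 2*Real.log 3 - 2*Real.log 2 := by
        have : (2:ℝ) * Real.log 3 - 2 * Real.log 2 = Real.log ((3/2)^(2:ℕ)) := by
          rw [Real.log_pow]
          push_cast
          rw [Real.log_div (by norm_num) (by norm_num)]
          ring
        rw [this]
        apply Real.log_le_log (by norm_num)
        norm_num
      nlinarith
    have C : 0 ≤ (3 - y) * (y * Real.log 2 - 2) := by
      apply mul_nonneg <;> linarith
    rw [← mul_le_mul_iff_left₀ hy0]
    nlinarith [mul_le_mul_of_nonneg_left A (by positivity : (0:ℝ) ≤ 2*k)]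

theorem DDmono {k : ℕ} (hk : 1 ≤ k) {m m' : ℕ} (h : m ≤ m') : DD k m ≤ DD k m' := by
  have hk0 : (0:ℝ) < k := by exact_mod_cast hk
  unfold DD
  split_ifs with h1 h2 h2
  · have : (m:ℝ) ≤ m' := by exact_mod_cast h
    linarith
  · have hm : (m:ℝ) ≤ k := by exact_mod_cast h1
    have hlog : 0 ≤ Real.logb 2 ((m':ℝ)/k) := by
      apply Real.logb_nonneg (by norm_num)
      rw [le_div_iff₀ hk0]
      push_neg at h2
      have : (k:ℝ) < m' := by exact_mod_cast h2
      linarith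
    nlinarith
  · omega
  · push_neg at h1 h2
    have hm : (k:ℝ) < m := by exact_mod_cast h1
    have hm' : (m:ℝ) ≤ m' := by exact_mod_cast h
    have : Real.logb 2 ((m:ℝ)/k) ≤ Real.logb 2 ((m':ℝ)/k) := by
      apply Real.logb_le_logb_of_le (by norm_num : (1:ℝ) < 2) (div_pos (by linarith) hk0)
      exact (div_le_div_iff_of_pos_right hk0).mpr hm'
    nlinarith

theorem Dstep {k c t M : ℕ} (hk : 1 ≤ k) (ht : t ≤ k) (hc : k < c) (hM : M = (c - t + 1)/2) :
    (t:ℝ) + DD k M ≤ DD k c := by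
  have hk0 : (0:ℝ) < k := by exact_mod_cast hk
  have hc0 : (0:ℝ) < c := Nat.cast_pos.mpr (by omega)
  have h2a : 2*M ≤ c - t + 1 := by omega
  have h2b : c - t ≤ 2*M := by omega
  have hM1 : 1 ≤ M := by omega
  have h2aR : 2*(M:ℝ) ≤ (c:ℝ) - t + 1 := by
    have h' : 2*M + t ≤ c + 1 := by omega
    have := (Nat.cast_le (α := ℝ)).mpr h'
    push_cast at this; linarith
  have h2bR : (c:ℝ) - t ≤ 2*(M:ℝ) := by
    have h' : c ≤ 2*M + t := by omega
    have := (Nat.cast_le (α := ℝ)).mpr h'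
    push_cast at this; linarith
  have hDc : DD k c = (k:ℝ) * Real.logb 2 ((c:ℝ)/k) + ((k:ℝ) - 1) := by
    rw [DD, if_neg (by omega)]
  by_cases hMk : M ≤ k
  · -- small case
    have hDM : DD k M = (M:ℝ) - 1 := by rw [DD, if_pos hMk]
    rw [hDM, hDc]
    have hc3 : c ≤ 3*k := by omega
    have hcc1 : (k:ℝ) + 1 ≤ (c:ℝ) := by
      have h' : k + 1 ≤ c := hc
      have := (Nat.cast_le (α := ℝ)).mpr h'
      push_cast at this
      linarith
    have hcc3 : (c:ℝ) ≤ 3*(k:ℝ) := by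
      have := (Nat.cast_le (α := ℝ)).mpr hc3
      push_cast at this
      linarith
    have key := fact2 (k := (k:ℝ)) (c := (c:ℝ)) (by exact_mod_cast hk) hcc1 hcc3
    have hL : (0:ℝ) < Real.log 2 := Real.log_pos (by norm_num)
    have hlogb : (k:ℝ) * Real.logb 2 ((c:ℝ)/k) = k * Real.log ((c:ℝ)/k) / Real.log 2 := by
      rw [Real.logb]; ring
    rw [hlogb]
    rw [div_eq_mul_inv, ← sub_nonneg]
    have htR : (t:ℝ) ≤ k := by exact_mod_cast ht
    -- goal: k * log(c/k) * (log 2)⁻¹ + (k-1) - (t + (M-1)) ≥ 0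
    have key' : ((c:ℝ) - k + 1)/2 ≤ k * Real.log ((c:ℝ)/k) * (Real.log 2)⁻¹ := by
      have e2 : (k:ℝ) * Real.log ((c:ℝ)/k) * (Real.log 2)⁻¹
          = (2*(k:ℝ)*Real.log ((c:ℝ)/k)) * ((Real.log 2)⁻¹/2) := by ring
      have e3 : ((c:ℝ)-(k:ℝ)+1)/2 = (((c:ℝ)-(k:ℝ)+1) * Real.log 2) * ((Real.log 2)⁻¹/2) := by
        field_simp [hL.ne']
      rw [e2, e3]
      exact mul_le_mul_of_nonneg_right key (by positivity)
    nlinarith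
  · push_neg at hMk
    have hDM : DD k M = (k:ℝ) * Real.logb 2 ((M:ℝ)/k) + ((k:ℝ) - 1) := by
      rw [DD, if_neg (by omega)]
    rw [hDM, hDc]
    have hM0 : (0:ℝ) < M := by have : 0 < M := hM1; exact_mod_cast this
    have hdiff : Real.logb 2 ((c:ℝ)/k) - Real.logb 2 ((M:ℝ)/k) = Real.logb 2 ((c:ℝ)/M) := by
      rw [← Real.logb_div (by positivity) (by positivity)]
      congr 1
      field_simp
    have hMc : (M:ℝ) ≤ c := by
      have : M ≤ c := by omega
      exact_mod_cast this
    rcases Nat.eq_zero_or_pos t with rfl | ht1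
    · have hlog : 0 ≤ Real.logb 2 ((c:ℝ)/M) := by
        apply Real.logb_nonneg (by norm_num)
        rw [le_div_iff₀ hM0]; linarith
      push_cast
      nlinarith
    · -- t ≥ 1 : 2M ≤ c so logb 2 (c/M) ≥ 1
      have h2Mc : 2*(M:ℝ) ≤ c := by
        have : 2*M ≤ c := by omega
        exact_mod_cast this
      have hlog : 1 ≤ Real.logb 2 ((c:ℝ)/M) := by
        rw [show (1:ℝ) = Real.logb 2 2 by simp]
        apply Real.logb_le_logb_of_le (by norm_num : (1:ℝ) < 2) (by norm_num)
        rw [le_div_iff₀ hM0]; linarith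
      have htR : (t:ℝ) ≤ k := by exact_mod_cast ht
      nlinarith
section P3
variable {V : Type*} [DecidableEq V] [Fintype V] {E : V → V → Prop}

theorem crk_le_DD (hlf : ∀ x, ¬ E x x) (k : ℕ) (hk1 : 1 ≤ k)
    (hks : ∀ U : Finset V, ∃ T₀ : Finset V, T₀.card ≤ k ∧ IsWeakBalSep E U T₀) :
    ∀ m : ℕ, ∀ S : Finset V, S.Nonempty → S.card ≤ m → (crk E S : ℝ) ≤ DD k m := by
  intro m
  induction m using Nat.strong_induction_on with
  | _ m ih =>
    intro S hSne hSm
    by_cases hSk : S.card ≤ k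
    · have h1 := crk_lt_card hlf S hSne
      have h2 : (crk E S : ℝ) ≤ (S.card:ℝ) - 1 := by
        have h3 : crk E S + 1 ≤ S.card := h1
        have := (Nat.cast_le (α := ℝ)).mpr h3
        push_cast at this; linarith
      calc (crk E S : ℝ) ≤ (S.card:ℝ) - 1 := h2
        _ = DD k S.card := by rw [DD, if_pos hSk]
        _ ≤ DD k m := DDmono hk1 hSm
    · push_neg at hSk
      obtain ⟨T₀, hT₀k, hT₀sep⟩ := hks S
      set T := T₀ ∩ S with hTdef
      have hTS : T ⊆ S := Finset.inter_subset_right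
      have hTk : T.card ≤ k := le_trans (Finset.card_le_card Finset.inter_subset_left) hT₀k
      have hsd : S \ T = S \ T₀ := by
        ext x
        simp only [hTdef, Finset.mem_sdiff, Finset.mem_inter]
        tauto
      set M := ((S \ T).card + 1)/2 with hMdef
      have hsep : ∀ w ∈ S \ T, (sccOf E (S \ T) w).card ≤ M := by
        intro w hw
        rw [hMdef, hsd]
        exact hT₀sep w (hsd ▸ hw)
      have hcsd : (S \ T).card = S.card - T.card := Finset.card_sdiff_of_subset hTS
      have hM1 : 1 ≤ M := by omega
      have hMm : M < m := by omega
      set Fam := Finset.univ.powerset.filter (fun S' : Finset V => S'.Nonempty ∧ S'.card ≤ M)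
        with hFam
      set F := Fam.sup (crk E) with hFdef
      have hF : ∀ S' : Finset V, S'.Nonempty → S'.card ≤ M → crk E S' ≤ F := by
        intro S' h1 h2
        exact Finset.le_sup (Finset.mem_filter.mpr
          ⟨Finset.mem_powerset.mpr (Finset.subset_univ _), h1, h2⟩)
      have hcrk : crk E S ≤ T.card + F := by
        have h := crk_le_sep hlf S T M F hsep hF
        rwa [Finset.inter_eq_right.mpr hTS] at h
      have hFamne : Fam.Nonempty := by
        obtain ⟨v, hv⟩ := hSne
        refine ⟨{v}, Finset.mem_filter.mpr ⟨Finset.mem_powerset.mpr (Finset.subset_univ _),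
          Finset.singleton_nonempty v, ?_⟩⟩
        simpa using hM1
      obtain ⟨S₀, hS₀, hFeq⟩ := Finset.exists_mem_eq_sup Fam hFamne (crk E)
      obtain ⟨-, hS₀ne, hS₀M⟩ := Finset.mem_filter.mp hS₀
      have hFle : (F:ℝ) ≤ DD k M := by
        rw [hFdef, hFeq]
        exact ih M hMm S₀ hS₀ne hS₀M
      have hnum : (T.card:ℝ) + DD k M ≤ DD k S.card := Dstep hk1 hTk hSk (by omega)
      have hcast : (crk E S : ℝ) ≤ (T.card:ℝ) + (F:ℝ) := by
        have := (Nat.cast_le (α := ℝ)).mpr hcrk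
        push_cast at this
        linarith
      calc (crk E S:ℝ) ≤ (T.card:ℝ) + F := hcast
        _ ≤ (T.card:ℝ) + DD k M := by linarith
        _ ≤ DD k S.card := hnum
        _ ≤ DD k m := DDmono hk1 hSm

end P3
section P2
variable {V : Type*} [DecidableEq V] {E : V → V → Prop}

theorem exists_min_reach {S : Finset V} (hne : S.Nonempty) :
    ∃ v ∈ S, ∀ u ∈ S, ReachIn E S u v → ReachIn E S v u := by
  obtain ⟨v, hv, hmin⟩ :=
    S.exists_min_image (fun v => (S.filter (fun u => ReachIn E S u v)).card) hne
  refine ⟨v, hv, fun u hu hr => ?_⟩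
  by_contra hnr
  have hsub : S.filter (fun w => ReachIn E S w u) ⊆ S.filter (fun w => ReachIn E S w v) := by
    intro w hw
    rw [Finset.mem_filter] at hw ⊢
    exact ⟨hw.1, reachIn_trans hw.2 hr⟩
  have hss : S.filter (fun w => ReachIn E S w u) ⊂ S.filter (fun w => ReachIn E S w v) := by
    refine ⟨hsub, fun hcon => ?_⟩
    have hmem : v ∈ S.filter (fun w => ReachIn E S w u) :=
      hcon (Finset.mem_filter.mpr ⟨hv, .refl⟩)
    exact hnr (Finset.mem_filter.mp hmem).2
  have h1 := Finset.card_lt_card hss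
  have h2 := hmin u hu
  omega

theorem topo_sort (hlf : ∀ x, ¬ E x x) :
    ∀ S : Finset V, AcyclicIn E S → ∃ l : List V, l.Nodup ∧ (∀ v, v ∈ l ↔ v ∈ S) ∧
      (∀ u v, u ∈ S → v ∈ S → E u v → l.idxOf u < l.idxOf v) := by
  intro S
  induction S using Finset.strongInduction with
  | _ S ih =>
    intro hac
    rcases S.eq_empty_or_nonempty with rfl | hne
    · exact ⟨[], List.nodup_nil, by simp, by simp⟩
    obtain ⟨v, hv, hmin⟩ := exists_min_reach (E := E) hne
    have hmin' : ∀ u ∈ S, ReachIn E S u v → u = v := by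
      intro u hu hr
      by_contra hne'
      exact not_acyclic_of_mutual hne' hr (hmin u hu hr) hac
    obtain ⟨l', hnd', hmem', hord'⟩ := ih (S.erase v) (Finset.erase_ssubset hv)
      (acyclicIn_mono (Finset.erase_subset v S) hac)
    have hvl' : v ∉ l' := fun hmem => (Finset.mem_erase.mp ((hmem' v).mp hmem)).1 rfl
    refine ⟨v :: l', List.nodup_cons.mpr ⟨hvl', hnd'⟩, ?_, ?_⟩
    · intro w
      rw [List.mem_cons, hmem' w, Finset.mem_erase]
      constructor
      · rintro (rfl | ⟨-, h⟩)
        · exact hv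
        · exact h
      · intro hw
        by_cases hwv : w = v
        · exact Or.inl hwv
        · exact Or.inr ⟨hwv, hw⟩
    · intro u w hu hw he
      by_cases huv : u = v
      · subst huv
        have hwv : w ≠ u := fun h => hlf u (h ▸ he)
        rw [List.idxOf_cons_self, List.idxOf_cons_ne _ (Ne.symm hwv)]
        omega
      · have hwv : w ≠ v := by
          rintro rfl
          exact huv (hmin' u hu (Relation.ReflTransGen.single ⟨hu, hw, he⟩))
        rw [List.idxOf_cons_ne _ (fun h => huv h.symm), List.idxOf_cons_ne _ (Ne.symm hwv)]
        have := hord' u w (Finset.mem_erase.mpr ⟨huv, hu⟩) (Finset.mem_erase.mpr ⟨hwv, hw⟩) he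
        omega

def PD (E : V → V → Prop) (S : Finset V) (L : List (Finset V)) : Prop :=
  (∀ W ∈ L, W ⊆ S) ∧ (∀ v ∈ S, ∃ W ∈ L, v ∈ W) ∧
  (∀ i j k : ℕ, i < j → j < k →
    ∀ (hi : i < L.length) (hj : j < L.length) (hk : k < L.length),
      ∀ v, v ∈ L[i] → v ∈ L[k] → v ∈ L[j]) ∧
  (∀ u v, u ∈ S → v ∈ S → E u v → (∃ W ∈ L, u ∈ W ∧ v ∈ W) ∨
      ∃ (i j : ℕ) (hi : i < L.length) (hj : j < L.length), i < j ∧ u ∈ L[i] ∧ v ∈ L[j])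

theorem exists_PD (hlf : ∀ x, ¬ E x x) :
    ∀ S : Finset V, ∃ L : List (Finset V), PD E S L ∧ ∀ W ∈ L, W.card ≤ crk E S + 1 := by
  intro S
  induction S using Finset.strongInduction with
  | _ S ih =>
    by_cases hac : AcyclicIn E S
    · -- acyclic: topological order, singleton bags
      obtain ⟨l, hnd, hmem, hord⟩ := topo_sort hlf S hac
      refine ⟨l.map (fun v => ({v} : Finset V)), ⟨?_, ?_, ?_, ?_⟩, ?_⟩
      · intro W hW
        obtain ⟨w, hwl, rfl⟩ := List.mem_map.mp hW
        exact Finset.singleton_subset_iff.mpr ((hmem w).mp hwl)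
      · intro w hw
        exact ⟨{w}, List.mem_map_of_mem ((hmem w).mpr hw), Finset.mem_singleton_self w⟩
      · intro i j k hij hjk hi hj hk v h1 h2
        rw [List.getElem_map] at h1 h2
        rw [Finset.mem_singleton] at h1 h2
        have hik := h1.symm.trans h2
        rw [hnd.getElem_inj_iff] at hik
        omega
      · intro u v hu hv he
        right
        have hil : l.idxOf u < l.length := List.idxOf_lt_length_iff.mpr ((hmem u).mpr hu)
        have hjl : l.idxOf v < l.length := List.idxOf_lt_length_iff.mpr ((hmem v).mpr hv)
        refine ⟨l.idxOf u, l.idxOf v, by simpa using hil, by simpa using hjl,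
          hord u v hu hv he, ?_, ?_⟩
        · rw [List.getElem_map, Finset.mem_singleton, List.getElem_idxOf hil]
        · rw [List.getElem_map, Finset.mem_singleton, List.getElem_idxOf hjl]
      · intro W hW
        obtain ⟨w, hwl, rfl⟩ := List.mem_map.mp hW
        simp
    by_cases hsc : StronglyConnIn E S
    · -- strongly connected: insert the erased vertex into every bag
      obtain ⟨v, hv, hveq⟩ := crk_sc_attained hac hsc
      obtain ⟨L', ⟨hsub', hcov', hint', hedge'⟩, hcard'⟩ := ih (S.erase v) (Finset.erase_ssubset hv)
      set L : List (Finset V) := ({v} : Finset V) :: L'.map (insert v) with hL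
      have hlen : L.length = L'.length + 1 := by simp [hL]
      have hget0 : L[0]'(by omega) = {v} := rfl
      have hgetS : ∀ (i : ℕ) (hi : i < L'.length),
          L[i+1]'(by omega) = insert v (L'[i]'hi) := by
        intro i hi
        simp [hL]
      refine ⟨L, ⟨?_, ?_, ?_, ?_⟩, ?_⟩
      · intro W hW
        rcases List.mem_cons.mp hW with rfl | hW'
        · exact Finset.singleton_subset_iff.mpr hv
        · obtain ⟨W', hmW, rfl⟩ := List.mem_map.mp hW'
          exact Finset.insert_subset hv ((hsub' W' hmW).trans (Finset.erase_subset v S))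
      · intro w hw
        by_cases hwv : w = v
        · exact ⟨{v}, List.mem_cons_self, by simp [hwv]⟩
        · obtain ⟨W', hW', hw'⟩ := hcov' w (Finset.mem_erase.mpr ⟨hwv, hw⟩)
          exact ⟨insert v W', List.mem_cons_of_mem _ (List.mem_map_of_mem hW'),
            Finset.mem_insert_of_mem hw'⟩
      · intro i j k hij hjk hi hj hk w h1 h2
        by_cases hwv : w = v
        · subst hwv
          obtain ⟨j', rfl⟩ : ∃ j', j = j' + 1 := ⟨j - 1, by omega⟩
          rw [hgetS j' (by omega)]
          exact Finset.mem_insert_self w _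
        · obtain ⟨i', rfl⟩ : ∃ i', i = i' + 1 := by
            rcases Nat.eq_zero_or_pos i with rfl | hpos
            · rw [hget0] at h1
              exact absurd (Finset.mem_singleton.mp h1) hwv
            · exact ⟨i - 1, by omega⟩
          obtain ⟨j', rfl⟩ : ∃ j', j = j' + 1 := ⟨j - 1, by omega⟩
          obtain ⟨k', rfl⟩ : ∃ k', k = k' + 1 := ⟨k - 1, by omega⟩
          rw [hgetS i' (by omega)] at h1
          rw [hgetS k' (by omega)] at h2
          rw [hgetS j' (by omega)]
          have h1' := Finset.mem_of_mem_insert_of_ne h1 hwv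
          have h2' := Finset.mem_of_mem_insert_of_ne h2 hwv
          exact Finset.mem_insert_of_mem
            (hint' i' j' k' (by omega) (by omega) (by omega) (by omega) (by omega) w h1' h2')
      · intro u w hu hw he
        by_cases huv : u = v
        · subst huv
          by_cases hwv : w = u
          · exact absurd he (hwv ▸ hlf u)
          · obtain ⟨W', hW', hw'⟩ := hcov' w (Finset.mem_erase.mpr ⟨hwv, hw⟩)
            exact Or.inl ⟨insert u W', List.mem_cons_of_mem _ (List.mem_map_of_mem hW'),
              Finset.mem_insert_self u _, Finset.mem_insert_of_mem hw'⟩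
        · by_cases hwv : w = v
          · subst hwv
            obtain ⟨W', hW', hu'⟩ := hcov' u (Finset.mem_erase.mpr ⟨huv, hu⟩)
            exact Or.inl ⟨insert w W', List.mem_cons_of_mem _ (List.mem_map_of_mem hW'),
              Finset.mem_insert_of_mem hu', Finset.mem_insert_self w _⟩
          · rcases hedge' u w (Finset.mem_erase.mpr ⟨huv, hu⟩) (Finset.mem_erase.mpr ⟨hwv, hw⟩)
              he with ⟨W', hW', hu', hw'⟩ | ⟨i, j, hi, hj, hij, hu', hw'⟩
            · exact Or.inl ⟨insert v W', List.mem_cons_of_mem _ (List.mem_map_of_mem hW'),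
                Finset.mem_insert_of_mem hu', Finset.mem_insert_of_mem hw'⟩
            · refine Or.inr ⟨i+1, j+1, by omega, by omega, by omega, ?_, ?_⟩
              · rw [hgetS i hi]; exact Finset.mem_insert_of_mem hu'
              · rw [hgetS j hj]; exact Finset.mem_insert_of_mem hw'
      · intro W hW
        rcases List.mem_cons.mp hW with rfl | hW'
        · simp
        · obtain ⟨W', hmW, rfl⟩ := List.mem_map.mp hW'
          have h1 := Finset.card_insert_le v W'
          have h2 := hcard' W' hmW
          omega
    · -- not strongly connected: peel off a source SCC
      obtain ⟨v₀, hv₀, hmin⟩ := exists_min_reach (E := E) (nonempty_of_not_acyclic hac)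
      set Q := sccOf E S v₀ with hQ
      have hQsub : Q ⊆ S := sccOf_subset
      have hv₀Q : v₀ ∈ Q := mem_sccOf_self hv₀
      have hQss : Q ⊂ S := sccOf_ssubset hsc hv₀
      have hstay : ∀ a b, ReachIn E S a b → a ∉ Q → (b ∉ Q ∧ ReachIn E (S \ Q) a b) := by
        intro a b hr ha
        induction hr with
        | refl => exact ⟨ha, .refl⟩
        | @tail c b h1 h2 ih =>
          obtain ⟨hcQ, hrc⟩ := ih
          have hbQ : b ∉ Q := by
            intro hbQ
            have hc1 : ReachIn E S c v₀ :=
              reachIn_trans (Relation.ReflTransGen.single h2) (mem_sccOf.mp hbQ).2.2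
            exact hcQ (mem_sccOf.mpr ⟨h2.1, hmin c h2.1 hc1, hc1⟩)
          exact ⟨hbQ, hrc.tail ⟨Finset.mem_sdiff.mpr ⟨h2.1, hcQ⟩,
            Finset.mem_sdiff.mpr ⟨h2.2.1, hbQ⟩, h2.2.2⟩⟩
      have hQclosed : ∀ u w, u ∈ S → u ∉ Q → w ∈ Q → ¬ E u w := by
        intro u w hu huQ hwQ he
        have h1 : ReachIn E S u v₀ :=
          reachIn_trans (Relation.ReflTransGen.single ⟨hu, hQsub hwQ, he⟩) (mem_sccOf.mp hwQ).2.2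
        exact huQ (mem_sccOf.mpr ⟨hu, hmin u hu h1, h1⟩)
      have hscc_eq : ∀ u ∈ S \ Q, sccOf E (S \ Q) u = sccOf E S u := by
        intro u hu
        apply Finset.Subset.antisymm (sccOf_mono Finset.sdiff_subset)
        intro w hw
        obtain ⟨hwS, h1, h2⟩ := mem_sccOf.mp hw
        have huQ : u ∉ Q := (Finset.mem_sdiff.mp hu).2
        obtain ⟨hwQ, h1'⟩ := hstay u w h1 huQ
        obtain ⟨-, h2'⟩ := hstay w u h2 hwQ
        exact mem_sccOf.mpr ⟨Finset.mem_sdiff.mpr ⟨hwS, hwQ⟩, h1', h2'⟩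
      have hcrkQ : crk E Q ≤ crk E S := by
        rw [crk_nsc_eq hac hsc]
        exact Finset.le_sup (f := fun v => crk E (sccOf E S v)) hv₀
      have hSQss : S \ Q ⊂ S := Finset.sdiff_ssubset hQsub ⟨v₀, hv₀Q⟩
      have hcrkSQ : crk E (S \ Q) ≤ crk E S := by
        by_cases hac2 : AcyclicIn E (S \ Q)
        · rw [crk_acyclic hac2]; exact Nat.zero_le _
        have hne2 : (S \ Q).Nonempty := nonempty_of_not_acyclic hac2
        by_cases hsc2 : StronglyConnIn E (S \ Q)
        · obtain ⟨u, hu⟩ := hne2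
          have heq : S \ Q = sccOf E S u := by rw [← hscc_eq u hu, sccOf_eq_self hsc2 hu]
          rw [heq, crk_nsc_eq hac hsc]
          exact Finset.le_sup (f := fun v => crk E (sccOf E S v)) (Finset.mem_sdiff.mp hu).1
        · rw [crk_nsc_eq hac2 hsc2, crk_nsc_eq hac hsc]
          apply Finset.sup_le
          intro u hu
          rw [hscc_eq u hu]
          exact Finset.le_sup (f := fun v => crk E (sccOf E S v)) (Finset.mem_sdiff.mp hu).1
      obtain ⟨L₁, ⟨hsub₁, hcov₁, hint₁, hedge₁⟩, hcard₁⟩ := ih Q hQss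
      obtain ⟨L₂, ⟨hsub₂, hcov₂, hint₂, hedge₂⟩, hcard₂⟩ := ih (S \ Q) hSQss
      set n₁ := L₁.length with hn₁
      have hlen : (L₁ ++ L₂).length = L₁.length + L₂.length := List.length_append
      have hgetl : ∀ (i : ℕ) (hi : i < n₁), (L₁ ++ L₂)[i]'(by omega) = L₁[i]'hi := by
        intro i hi
        exact List.getElem_append_left hi
      have hgetr : ∀ (i : ℕ) (hi : i < L₂.length), (L₁ ++ L₂)[n₁ + i]'(by omega) = L₂[i]'hi := by
        intro i hi
        rw [List.getElem_append_right (by omega)]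
        congr 1
        omega
      refine ⟨L₁ ++ L₂, ⟨?_, ?_, ?_, ?_⟩, ?_⟩
      · intro W hW
        rcases List.mem_append.mp hW with h | h
        · exact (hsub₁ W h).trans hQsub
        · exact (hsub₂ W h).trans Finset.sdiff_subset
      · intro w hw
        by_cases hwQ : w ∈ Q
        · obtain ⟨W, h1, h2⟩ := hcov₁ w hwQ
          exact ⟨W, List.mem_append_left _ h1, h2⟩
        · obtain ⟨W, h1, h2⟩ := hcov₂ w (Finset.mem_sdiff.mpr ⟨hw, hwQ⟩)
          exact ⟨W, List.mem_append_right _ h1, h2⟩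
      · intro i j k hij hjk hi hj hk w h1 h2
        by_cases hkn : k < n₁
        · rw [hgetl i (by omega)] at h1
          rw [hgetl k (by omega)] at h2
          rw [hgetl j (by omega)]
          exact hint₁ i j k hij hjk (by omega) (by omega) (by omega) w h1 h2
        · by_cases hin : i < n₁
          · -- contradiction : w in both Q-side and (S\Q)-side
            exfalso
            rw [hgetl i (by omega)] at h1
            obtain ⟨k', rfl⟩ : ∃ k', k = n₁ + k' := ⟨k - n₁, by omega⟩
            rw [hgetr k' (by omega)] at h2
            have hw1 : w ∈ Q := hsub₁ _ (List.getElem_mem _) h1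
            have hw2 : w ∈ S \ Q := hsub₂ _ (List.getElem_mem _) h2
            exact (Finset.mem_sdiff.mp hw2).2 hw1
          · obtain ⟨i', rfl⟩ : ∃ i', i = n₁ + i' := ⟨i - n₁, by omega⟩
            obtain ⟨j', rfl⟩ : ∃ j', j = n₁ + j' := ⟨j - n₁, by omega⟩
            obtain ⟨k', rfl⟩ : ∃ k', k = n₁ + k' := ⟨k - n₁, by omega⟩
            rw [hgetr i' (by omega)] at h1
            rw [hgetr k' (by omega)] at h2
            rw [hgetr j' (by omega)]
            exact hint₂ i' j' k' (by omega) (by omega) (by omega) (by omega) (by omega) w h1 h2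
      · intro u w hu hw he
        by_cases huQ : u ∈ Q
        · by_cases hwQ : w ∈ Q
          · rcases hedge₁ u w huQ hwQ he with ⟨W, h1, h2, h3⟩ | ⟨i, j, hi, hj, hij, h2, h3⟩
            · exact Or.inl ⟨W, List.mem_append_left _ h1, h2, h3⟩
            · refine Or.inr ⟨i, j, by omega, by omega, hij, ?_, ?_⟩
              · rw [hgetl i hi]; exact h2
              · rw [hgetl j hj]; exact h3
          · -- u ∈ Q, w ∉ Q : forward
            obtain ⟨W, hW, huW⟩ := hcov₁ u huQ
            obtain ⟨i, hi, rfl⟩ := List.mem_iff_getElem.mp hW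
            obtain ⟨W', hW', hwW'⟩ := hcov₂ w (Finset.mem_sdiff.mpr ⟨hw, hwQ⟩)
            obtain ⟨j, hj, rfl⟩ := List.mem_iff_getElem.mp hW'
            refine Or.inr ⟨i, n₁ + j, by omega, by omega, by omega, ?_, ?_⟩
            · rw [hgetl i (by omega)]; exact huW
            · rw [hgetr j (by omega)]; exact hwW'
        · by_cases hwQ : w ∈ Q
          · exact absurd he (hQclosed u w hu huQ hwQ)
          · rcases hedge₂ u w (Finset.mem_sdiff.mpr ⟨hu, huQ⟩) (Finset.mem_sdiff.mpr ⟨hw, hwQ⟩)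
              he with ⟨W, h1, h2, h3⟩ | ⟨i, j, hi, hj, hij, h2, h3⟩
            · exact Or.inl ⟨W, List.mem_append_right _ h1, h2, h3⟩
            · refine Or.inr ⟨n₁ + i, n₁ + j, by omega, by omega, by omega, ?_, ?_⟩
              · rw [hgetr i hi]; exact h2
              · rw [hgetr j hj]; exact h3
      · intro W hW
        rcases List.mem_append.mp hW with h | h
        · have := hcard₁ W h; omega
        · have := hcard₂ W h; omega

theorem isDirPathDecomp_of_PD [Fintype V] {L : List (Finset V)} (h : PD E Finset.univ L) :
    IsDirPathDecomp E L := by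
  obtain ⟨hsub, hcov, hint, hedge⟩ := h
  refine ⟨fun v => hcov v (Finset.mem_univ v), ?_, ?_⟩
  · intro i j k hij hjk hi hj hk v h1 h2
    rw [List.get_eq_getElem] at h1 h2 ⊢
    exact hint i j k hij hjk hi hj hk v h1 h2
  · intro u v he
    rcases hedge u v (Finset.mem_univ u) (Finset.mem_univ v) he with h | ⟨i, j, hi, hj, hij, h1, h2⟩
    · exact Or.inl h
    · refine Or.inr ⟨i, j, hi, hj, hij, ?_, ?_⟩
      · rw [List.get_eq_getElem]; exact h1
      · rw [List.get_eq_getElem]; exact h2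

end P2
section P1
variable {V : Type*} [DecidableEq V] {E : V → V → Prop}

theorem scc_confine {A X Y : Finset V} (hA : A = Y ∪ X)
    (hnoedge : ∀ u ∈ X, ∀ w ∈ Y, ¬ E u w) :
    ∀ v ∈ A, sccOf E A v ⊆ X ∨ sccOf E A v ⊆ Y := by
  have hreach : ∀ a b, ReachIn E A a b → a ∈ X → b ∈ X := by
    intro a b hr
    induction hr with
    | refl => exact id
    | @tail c b h1 h2 ih =>
      intro ha
      have hcX := ih ha
      have hbA : b ∈ A := h2.2.1
      rcases Finset.mem_union.mp (hA ▸ hbA) with hbY | hbX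
      · exact absurd h2.2.2 (hnoedge c hcX b hbY)
      · exact hbX
  intro v hv
  by_cases hvX : v ∈ X
  · left
    intro w hw
    exact hreach v w (mem_sccOf.mp hw).2.1 hvX
  · right
    intro w hw
    have hwA : w ∈ A := sccOf_subset hw
    rcases Finset.mem_union.mp (hA ▸ hwA) with hbY | hbX
    · exact hbY
    · exact absurd (hreach w v (mem_sccOf.mp hw).2.2 hbX) hvX

theorem balsep_of_partition {U S X Y : Finset V}
    (hA : U \ S = Y ∪ X)
    (hnoedge : ∀ u ∈ X, ∀ w ∈ Y, ¬ E u w)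
    (hX : 2 * X.card ≤ (U \ S).card + 1) (hY : 2 * Y.card ≤ (U \ S).card + 1) :
    IsWeakBalSep E U S := by
  intro v hv
  rcases scc_confine hA hnoedge v hv with h | h
  · have h1 := Finset.card_le_card h
    omega
  · have h1 := Finset.card_le_card h
    omega

theorem branch_one {U : Finset V} (If Ig : V → ℕ)
    (hfg : ∀ v, If v ≤ Ig v)
    (hedge : ∀ u w, u ∈ U → w ∈ U → E u w → If u ≤ Ig w)
    (j d : ℕ) (hd1 : 1 ≤ d)
    (hda : d ≤ (U.filter (fun v => Ig v = j)).card)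
    (hbal1 : (U.filter (fun v => Ig v < j)).card + d
        ≤ (U.filter (fun v => j < If v)).card + 1)
    (hbal2 : (U.filter (fun v => j < If v)).card
        ≤ (U.filter (fun v => Ig v < j)).card + d + 1) :
    ∃ S : Finset V, S ⊆ U.filter (fun v => If v ≤ j ∧ j ≤ Ig v) ∧
      S.card + d = (U.filter (fun v => If v ≤ j ∧ j ≤ Ig v)).card ∧ IsWeakBalSep E U S := by
  classical
  set D := U.filter (fun v => Ig v = j) with hD
  set Mid := U.filter (fun v => If v ≤ j ∧ j ≤ Ig v) with hMid
  set P := U.filter (fun v => Ig v < j) with hP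
  set Q := U.filter (fun v => j < If v) with hQ
  obtain ⟨D', hD'sub, hD'card⟩ := Finset.exists_subset_card_eq hda
  have hDMid : D ⊆ Mid := by
    intro x hx
    obtain ⟨hxU, hxg⟩ := Finset.mem_filter.mp hx
    exact Finset.mem_filter.mpr ⟨hxU, by have := hfg x; omega, by omega⟩
  have hD'Mid : D' ⊆ Mid := hD'sub.trans hDMid
  refine ⟨Mid \ D', Finset.sdiff_subset, ?_, ?_⟩
  · rw [Finset.card_sdiff_of_subset hD'Mid, hD'card]
    have := Finset.card_le_card hD'Mid
    omega
  · -- weak balanced separator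
    have hD'U : D' ⊆ U := hD'sub.trans (Finset.filter_subset _ _)
    have hA : U \ (Mid \ D') = (P ∪ D') ∪ Q := by
      ext x
      simp only [Finset.mem_sdiff, Finset.mem_union, hMid, hP, hQ, Finset.mem_filter]
      constructor
      · rintro ⟨hxU, hx⟩
        by_cases hxD' : x ∈ D'
        · exact Or.inl (Or.inr hxD')
        · have hnm : ¬ (If x ≤ j ∧ j ≤ Ig x) := fun hm => hx ⟨⟨hxU, hm⟩, hxD'⟩
          by_cases hfx : If x ≤ j
          · have h2 : ¬ (j ≤ Ig x) := fun hg => hnm ⟨hfx, hg⟩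
            exact Or.inl (Or.inl ⟨hxU, by omega⟩)
          · exact Or.inr ⟨hxU, by omega⟩
      · rintro ((⟨hxU, hxg⟩ | hxD') | ⟨hxU, hxf⟩)
        · exact ⟨hxU, fun h => by have := h.1.2.2; omega⟩
        · have hxD := hD'sub hxD'
          obtain ⟨hxU, -⟩ := Finset.mem_filter.mp hxD
          exact ⟨hxU, fun h => h.2 hxD'⟩
        · exact ⟨hxU, fun h => by have := h.1.2.1; omega⟩
    have hnoedge : ∀ u ∈ Q, ∀ w ∈ P ∪ D', ¬ E u w := by
      intro u hu w hw he
      obtain ⟨huU, huf⟩ := Finset.mem_filter.mp hu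
      have hwg : Ig w ≤ j ∧ w ∈ U := by
        rcases Finset.mem_union.mp hw with h | h
        · obtain ⟨h1, h2⟩ := Finset.mem_filter.mp h; exact ⟨by omega, h1⟩
        · obtain ⟨h1, h2⟩ := Finset.mem_filter.mp (hD'sub h); exact ⟨by omega, h1⟩
      have := hedge u w huU hwg.2 he
      omega
    have hdisjPD : Disjoint P D' := by
      rw [Finset.disjoint_left]
      intro x hx hx'
      obtain ⟨-, h1⟩ := Finset.mem_filter.mp hx
      obtain ⟨-, h2⟩ := Finset.mem_filter.mp (hD'sub hx')
      omega
    have hdisjY_Q : Disjoint (P ∪ D') Q := by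
      rw [Finset.disjoint_left]
      intro x hx hx'
      obtain ⟨-, h2⟩ := Finset.mem_filter.mp hx'
      rcases Finset.mem_union.mp hx with h | h
      · obtain ⟨-, h1⟩ := Finset.mem_filter.mp h
        have := hfg x; omega
      · obtain ⟨-, h1⟩ := Finset.mem_filter.mp (hD'sub h)
        have := hfg x; omega
    have hcardY : (P ∪ D').card = P.card + d := by
      rw [Finset.card_union_of_disjoint hdisjPD, hD'card]
    have hcardA : (U \ (Mid \ D')).card = P.card + d + Q.card := by
      rw [hA, Finset.card_union_of_disjoint hdisjY_Q, hcardY]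
    apply balsep_of_partition hA hnoedge
    · rw [hcardA]; omega
    · rw [hcardA, hcardY]; omega

theorem branch_two {U : Finset V} (If Ig : V → ℕ)
    (hfg : ∀ v, If v ≤ Ig v)
    (hedge : ∀ u w, u ∈ U → w ∈ U → E u w → If u ≤ Ig w)
    (j : ℕ)
    (hq2 : (U.filter (fun v => j < If v)).card ≤ (U.filter (fun v => Ig v < j)).card)
    (hP2 : (U.filter (fun v => Ig v < j)).card
        ≤ (U.filter (fun v => j < If v)).card + (U.filter (fun v => If v = j)).card + 1)
    (hc1 : 1 ≤ (U.filter (fun v => If v = j)).card) :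
    ∃ S : Finset V, S ⊆ U.filter (fun v => If v ≤ j ∧ j ≤ Ig v) ∧
      S.card + 1 ≤ (U.filter (fun v => If v ≤ j ∧ j ≤ Ig v)).card ∧ IsWeakBalSep E U S := by
  classical
  set C := U.filter (fun v => If v = j) with hC
  set Mid := U.filter (fun v => If v ≤ j ∧ j ≤ Ig v) with hMid
  set P := U.filter (fun v => Ig v < j) with hP
  set Q := U.filter (fun v => j < If v) with hQ
  set r := max (P.card - 2) Q.card with hr
  set e := Q.card + C.card - r with he
  have hrq : Q.card ≤ r := le_max_right _ _
  have hrp : P.card - 2 ≤ r := le_max_left _ _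
  have hrp' : r ≤ P.card := by
    rw [hr]
    apply max_le (by omega) hq2
  have he1 : 1 ≤ e := by omega
  have hez : e ≤ C.card := by omega
  obtain ⟨Z, hZsub, hZcard⟩ := Finset.exists_subset_card_eq (s := C) (n := C.card - e + 1) (by omega)
  have hCMid : C ⊆ Mid := by
    intro x hx
    obtain ⟨hxU, hxf⟩ := Finset.mem_filter.mp hx
    exact Finset.mem_filter.mpr ⟨hxU, by omega, by have := hfg x; omega⟩
  have hZMid : Z ⊆ Mid := hZsub.trans hCMid
  refine ⟨Mid \ Z, Finset.sdiff_subset, ?_, ?_⟩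
  · rw [Finset.card_sdiff_of_subset hZMid, hZcard]
    have := Finset.card_le_card hZMid
    omega
  · have hA : U \ (Mid \ Z) = P ∪ (Q ∪ Z) := by
      ext x
      simp only [Finset.mem_sdiff, Finset.mem_union, hMid, hP, hQ, Finset.mem_filter]
      constructor
      · rintro ⟨hxU, hx⟩
        by_cases hxZ : x ∈ Z
        · exact Or.inr (Or.inr hxZ)
        · have hnm : ¬ (If x ≤ j ∧ j ≤ Ig x) := fun hm => hx ⟨⟨hxU, hm⟩, hxZ⟩
          by_cases hfx : If x ≤ j
          · have h2 : ¬ (j ≤ Ig x) := fun hg => hnm ⟨hfx, hg⟩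
            exact Or.inl ⟨hxU, by omega⟩
          · exact Or.inr (Or.inl ⟨hxU, by omega⟩)
      · rintro (⟨hxU, hxg⟩ | ⟨hxU, hxf⟩ | hxZ)
        · exact ⟨hxU, fun h => by have := h.1.2.2; omega⟩
        · exact ⟨hxU, fun h => by have := h.1.2.1; omega⟩
        · have hxC := hZsub hxZ
          obtain ⟨hxU, -⟩ := Finset.mem_filter.mp hxC
          exact ⟨hxU, fun h => h.2 hxZ⟩
    have hnoedge : ∀ u ∈ Q ∪ Z, ∀ w ∈ P, ¬ E u w := by
      intro u hu w hw he'
      obtain ⟨hwU, hwg⟩ := Finset.mem_filter.mp hw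
      have huf : j ≤ If u ∧ u ∈ U := by
        rcases Finset.mem_union.mp hu with h | h
        · obtain ⟨h1, h2⟩ := Finset.mem_filter.mp h; exact ⟨by omega, h1⟩
        · obtain ⟨h1, h2⟩ := Finset.mem_filter.mp (hZsub h); exact ⟨by omega, h1⟩
      have := hedge u w huf.2 hwU he'
      omega
    have hdisjQZ : Disjoint Q Z := by
      rw [Finset.disjoint_left]
      intro x hx hx'
      obtain ⟨-, h1⟩ := Finset.mem_filter.mp hx
      obtain ⟨-, h2⟩ := Finset.mem_filter.mp (hZsub hx')
      omega
    have hdisjP_X : Disjoint P (Q ∪ Z) := by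
      rw [Finset.disjoint_left]
      intro x hx hx'
      obtain ⟨-, h1⟩ := Finset.mem_filter.mp hx
      rcases Finset.mem_union.mp hx' with h | h
      · obtain ⟨-, h2⟩ := Finset.mem_filter.mp h
        have := hfg x; omega
      · obtain ⟨-, h2⟩ := Finset.mem_filter.mp (hZsub h)
        have := hfg x; omega
    have hcardX : (Q ∪ Z).card = Q.card + (C.card - e + 1) := by
      rw [Finset.card_union_of_disjoint hdisjQZ, hZcard]
    have hcardA : (U \ (Mid \ Z)).card = P.card + (Q.card + (C.card - e + 1)) := by
      rw [hA, Finset.card_union_of_disjoint hdisjP_X, hcardX]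
    apply balsep_of_partition hA hnoedge
    · rw [hcardA, hcardX]; omega
    · rw [hcardA]; omega
end P1
section P1M
variable {V : Type*} [DecidableEq V] {E : V → V → Prop}

theorem sep_of_decomp (hlf : ∀ x, ¬ E x x) {L : List (Finset V)}
    (hdec : IsDirPathDecomp E L) {b : ℕ} (hb1 : 1 ≤ b) (hbags : ∀ W ∈ L, W.card ≤ b)
    (U : Finset V) :
    ∃ S : Finset V, S.card + 1 ≤ b ∧ IsWeakBalSep E U S := by
  classical
  obtain ⟨hcov0, hint0, hedge0⟩ := hdec
  rcases U.eq_empty_or_nonempty with rfl | hUne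
  · refine ⟨∅, by simpa using hb1, ?_⟩
    intro v hv
    simp at hv
  set bag : ℕ → Finset V := fun i => L.getD i ∅ with hbag
  have hbag_lt : ∀ (i : ℕ) (h : i < L.length), bag i = L[i] := by
    intro i h
    simp [hbag, List.getD_eq_getElem?_getD, List.getElem?_eq_getElem h]
  have hbag_ge : ∀ i : ℕ, L.length ≤ i → bag i = ∅ := by
    intro i h
    simp [hbag, List.getD_eq_getElem?_getD, List.getElem?_eq_none h]
  have hget : ∀ (i : ℕ) (hi : i < L.length), L.get ⟨i, hi⟩ = bag i := by
    intro i hi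
    rw [List.get_eq_getElem, hbag_lt i hi]
  have hcov : ∀ v : V, ∃ i, i < L.length ∧ v ∈ bag i := by
    intro v
    obtain ⟨W, hW, hvW⟩ := hcov0 v
    obtain ⟨i, hi, rfl⟩ := List.mem_iff_getElem.mp hW
    exact ⟨i, hi, by rw [hbag_lt i hi]; exact hvW⟩
  have hlen : 0 < L.length := by
    obtain ⟨u₀, hu₀⟩ := hUne
    obtain ⟨i, hi, -⟩ := hcov u₀
    omega
  set If : V → ℕ := fun v => sInf {i | v ∈ bag i} with hIf
  set Ig : V → ℕ := fun v => sSup {i | v ∈ bag i} with hIg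
  have hsetne : ∀ v : V, {i | v ∈ bag i}.Nonempty := by
    intro v
    obtain ⟨i, hi, h⟩ := hcov v
    exact ⟨i, h⟩
  have hsetbdd : ∀ v : V, BddAbove {i | v ∈ bag i} := by
    intro v
    refine ⟨L.length, fun i hi => ?_⟩
    have hi' : v ∈ bag i := hi
    by_contra hcon
    push_neg at hcon
    rw [hbag_ge i (by omega)] at hi'
    exact absurd hi' (Finset.notMem_empty v)
  have hf_mem : ∀ v, v ∈ bag (If v) := fun v => Nat.sInf_mem (hsetne v)
  have hg_mem : ∀ v, v ∈ bag (Ig v) := fun v => Nat.sSup_mem (hsetne v) (hsetbdd v)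
  have hf_le : ∀ v i, v ∈ bag i → If v ≤ i := fun v i h => Nat.sInf_le h
  have hg_ge : ∀ v i, v ∈ bag i → i ≤ Ig v := fun v i h => le_csSup (hsetbdd v) h
  have hfg : ∀ v, If v ≤ Ig v := fun v => hf_le v _ (hg_mem v)
  have hg_lt : ∀ v, Ig v < L.length := by
    intro v
    by_contra hcon
    push_neg at hcon
    have h := hg_mem v
    rw [hbag_ge _ hcon] at h
    exact absurd h (Finset.notMem_empty v)
  have hinterval : ∀ v j, If v ≤ j → j ≤ Ig v → v ∈ bag j := by
    intro v j h1 h2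
    rcases eq_or_lt_of_le h1 with heq | h1'
    · rw [← heq]; exact hf_mem v
    rcases eq_or_lt_of_le h2 with heq | h2'
    · rw [heq]; exact hg_mem v
    have hjl : j < L.length := lt_trans h2' (hg_lt v)
    have hm := hint0 (If v) j (Ig v) h1' h2' (by omega) hjl (hg_lt v) v
    rw [hget _ (by omega), hget _ hjl, hget _ (hg_lt v)] at hm
    exact hm (hf_mem v) (hg_mem v)
  have hedge : ∀ u w, u ∈ U → w ∈ U → E u w → If u ≤ Ig w := by
    intro u w hu hw he
    rcases hedge0 u w he with ⟨W, hW, huW, hwW⟩ | ⟨i, j, hi, hj, hij, hui, hwj⟩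
    · obtain ⟨i, hi, rfl⟩ := List.mem_iff_getElem.mp hW
      have h1 := hf_le u i (by rw [hbag_lt i hi]; exact huW)
      have h2 := hg_ge w i (by rw [hbag_lt i hi]; exact hwW)
      omega
    · rw [hget i hi] at hui
      rw [hget j hj] at hwj
      have h1 := hf_le u i hui
      have h2 := hg_ge w j hwj
      omega
  have hcap : ∀ j, j < L.length → (U.filter (fun v => If v ≤ j ∧ j ≤ Ig v)).card ≤ b := by
    intro j hj
    have hsubbag : U.filter (fun v => If v ≤ j ∧ j ≤ Ig v) ⊆ bag j := by
      intro v hvf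
      obtain ⟨-, h1, h2⟩ := Finset.mem_filter.mp hvf
      exact hinterval v j h1 h2
    have hbagcard : (bag j).card ≤ b := by
      rw [hbag_lt j hj]
      exact hbags _ (List.getElem_mem _)
    exact le_trans (Finset.card_le_card hsubbag) hbagcard
  have hQlen : ((U.filter (fun v => (L.length - 1) < If v)).card
      ≤ (U.filter (fun v => Ig v < (L.length - 1))).card) := by
    have hemp : U.filter (fun v => (L.length - 1) < If v) = ∅ := by
      apply Finset.filter_eq_empty_iff.mpr
      intro v hv
      have h1 := hfg v
      have h2 := hg_lt v
      omega
    rw [hemp]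
    simp
  set JS := {j : ℕ | (U.filter (fun v => j < If v)).card ≤ (U.filter (fun v => Ig v < j)).card}
    with hJS
  have hJSne : JS.Nonempty := ⟨L.length - 1, hQlen⟩
  set jθ := sInf JS with hjθ
  have hjmem : (U.filter (fun v => jθ < If v)).card ≤ (U.filter (fun v => Ig v < jθ)).card :=
    Nat.sInf_mem hJSne
  have hjmin : ∀ j, j < jθ → (U.filter (fun v => Ig v < j)).card
      < (U.filter (fun v => j < If v)).card := by
    intro j hj
    by_contra hcon
    push_neg at hcon
    have h := Nat.sInf_le (s := JS) hcon
    omega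
  have hjlt : jθ < L.length := by
    have h := Nat.sInf_le (s := JS) hQlen
    omega
  by_cases hj0 : jθ = 0
  · -- branch two at 0
    have hP0 : U.filter (fun v => Ig v < 0) = ∅ := by
      apply Finset.filter_eq_empty_iff.mpr
      intro v hv
      omega
    have hq0mem := hjmem
    rw [hj0, hP0] at hq0mem
    simp only [Finset.card_empty, Nat.le_zero, Finset.card_eq_zero] at hq0mem
    have hc1 : 1 ≤ (U.filter (fun v => If v = 0)).card := by
      obtain ⟨u₀, hu₀⟩ := hUne
      have hIfu : If u₀ = 0 := by
        by_contra hcon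
        have hm : u₀ ∈ U.filter (fun v => 0 < If v) := Finset.mem_filter.mpr ⟨hu₀, by omega⟩
        rw [hq0mem] at hm
        exact absurd hm (Finset.notMem_empty u₀)
      exact Finset.card_pos.mpr ⟨u₀, Finset.mem_filter.mpr ⟨hu₀, hIfu⟩⟩
    obtain ⟨S, hSsub, hScard, hSsep⟩ := branch_two If Ig hfg hedge 0
      (by rw [hP0, hq0mem]) (by rw [hP0]; simp) hc1
    refine ⟨S, ?_, hSsep⟩
    have hc := hcap 0 (by omega)
    omega
  · -- jθ ≥ 1
    have hj'lt : jθ - 1 < L.length := by omega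
    have hpq := hjmin (jθ - 1) (by omega)
    have hsplitP : (U.filter (fun v => Ig v < jθ)).card
        = (U.filter (fun v => Ig v < jθ - 1)).card + (U.filter (fun v => Ig v = jθ - 1)).card := by
      have hun : U.filter (fun v => Ig v < jθ)
          = U.filter (fun v => Ig v < jθ - 1) ∪ U.filter (fun v => Ig v = jθ - 1) := by
        ext x
        simp only [Finset.mem_union, Finset.mem_filter]
        constructor
        · rintro ⟨h1, h2⟩
          by_cases h : Ig x < jθ - 1
          · exact Or.inl ⟨h1, h⟩
          · exact Or.inr ⟨h1, by omega⟩
        · rintro (⟨h1, h2⟩ | ⟨h1, h2⟩)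
          · exact ⟨h1, by omega⟩
          · exact ⟨h1, by omega⟩
      rw [hun, Finset.card_union_of_disjoint]
      rw [Finset.disjoint_left]
      intro x hx hx'
      obtain ⟨-, h1⟩ := Finset.mem_filter.mp hx
      obtain ⟨-, h2⟩ := Finset.mem_filter.mp hx'
      omega
    have hsplitQ : (U.filter (fun v => jθ - 1 < If v)).card
        = (U.filter (fun v => jθ < If v)).card + (U.filter (fun v => If v = jθ)).card := by
      have hun : U.filter (fun v => jθ - 1 < If v)
          = U.filter (fun v => jθ < If v) ∪ U.filter (fun v => If v = jθ) := by
        ext x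
        simp only [Finset.mem_union, Finset.mem_filter]
        constructor
        · rintro ⟨h1, h2⟩
          by_cases h : jθ < If x
          · exact Or.inl ⟨h1, h⟩
          · exact Or.inr ⟨h1, by omega⟩
        · rintro (⟨h1, h2⟩ | ⟨h1, h2⟩)
          · exact ⟨h1, by omega⟩
          · exact ⟨h1, by omega⟩
      rw [hun, Finset.card_union_of_disjoint]
      rw [Finset.disjoint_left]
      intro x hx hx'
      obtain ⟨-, h1⟩ := Finset.mem_filter.mp hx
      obtain ⟨-, h2⟩ := Finset.mem_filter.mp hx'
      omega
    by_cases hc1 : 2 ≤ (U.filter (fun v => jθ - 1 < If v)).card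
          - (U.filter (fun v => Ig v < jθ - 1)).card
        ∧ (U.filter (fun v => jθ - 1 < If v)).card
          - (U.filter (fun v => Ig v < jθ - 1)).card - 1
          ≤ (U.filter (fun v => Ig v = jθ - 1)).card
    · obtain ⟨S, hSsub, hScard, hSsep⟩ := branch_one If Ig hfg hedge (jθ - 1)
        ((U.filter (fun v => jθ - 1 < If v)).card
          - (U.filter (fun v => Ig v < jθ - 1)).card - 1)
        (by omega) (by omega) (by omega) (by omega)
      refine ⟨S, ?_, hSsep⟩
      have hc := hcap (jθ - 1) hj'lt
      omega
    by_cases hc2 : (U.filter (fun v => jθ - 1 < If v)).card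
          = (U.filter (fun v => Ig v < jθ - 1)).card + 1
        ∧ 1 ≤ (U.filter (fun v => Ig v = jθ - 1)).card
    · obtain ⟨S, hSsub, hScard, hSsep⟩ := branch_one If Ig hfg hedge (jθ - 1) 1
        (by omega) (by omega) (by omega) (by omega)
      refine ⟨S, ?_, hSsep⟩
      have hc := hcap (jθ - 1) hj'lt
      omega
    · push_neg at hc1 hc2
      obtain ⟨S, hSsub, hScard, hSsep⟩ := branch_two If Ig hfg hedge jθ
        hjmem (by omega) (by omega)
      refine ⟨S, ?_, hSsep⟩
      have hc := hcap jθ hjlt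
      omega

end P1M
/-- Let `G` be a loop-free digraph with `n ≥ 1` vertices and weak separator
number `k ≥ 1`. Then `k ≤ dpw(G) ≤ crank(G) ≤ k·log₂(n/k) − 1 + k`. -/
theorem snum_dpw_crank_chain {V : Type*} [DecidableEq V] [Fintype V] (E : V → V → Prop)
    (k n : ℕ) (hn : Fintype.card V = n) (hn1 : 1 ≤ n)
    (hloopfree : ∀ v, ¬ E v v) (hk : snum E = k) (hk1 : 1 ≤ k) :
    k ≤ dpw E ∧ dpw E ≤ crank E ∧
      (crank E : ℝ) ≤ k * Real.logb 2 ((n : ℝ) / (k : ℝ)) - 1 + k := by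
  classical
  subst hn
  have hcrank : crank E = crk E Finset.univ := by
    rw [crank, crk, Finset.card_univ]
  obtain ⟨L₀, hPD₀, hcard₀⟩ := exists_PD hloopfree (Finset.univ : Finset V)
  have hdec₀ : IsDirPathDecomp E L₀ := isDirPathDecomp_of_PD hPD₀
  have hdpw_set_ne : {w : ℕ | ∃ L : List (Finset V),
      IsDirPathDecomp E L ∧ ∀ W ∈ L, W.card ≤ w + 1}.Nonempty :=
    ⟨crk E Finset.univ, L₀, hdec₀, hcard₀⟩
  have hdpw_le : dpw E ≤ crank E := by
    rw [hcrank]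
    exact Nat.sInf_le ⟨L₀, hdec₀, hcard₀⟩
  have hmemdpw : ∃ L : List (Finset V), IsDirPathDecomp E L ∧ ∀ W ∈ L, W.card ≤ dpw E + 1 :=
    Nat.sInf_mem hdpw_set_ne
  obtain ⟨L₁, hdec₁, hbag₁⟩ := hmemdpw
  have h1 : k ≤ dpw E := by
    rw [← hk, snum]
    apply Finset.sup_le
    intro U hU
    obtain ⟨S, hScard, hSsep⟩ := sep_of_decomp hloopfree hdec₁ (b := dpw E + 1)
      (by omega) hbag₁ U
    exact Nat.sInf_le ⟨S, by omega, hSsep⟩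
  have hkn : k ≤ Fintype.card V := by
    rw [← hk, snum]
    apply Finset.sup_le
    intro U hU
    have hUsep : IsWeakBalSep E U U := by
      intro v hv
      simp at hv
    have h2 : minWeakSep E U ≤ U.card := Nat.sInf_le ⟨U, le_refl _, hUsep⟩
    refine le_trans h2 (le_trans (Finset.card_le_card (Finset.mem_powerset.mp hU)) ?_)
    rw [Finset.card_univ]
  have hks : ∀ U : Finset V, ∃ T₀ : Finset V, T₀.card ≤ k ∧ IsWeakBalSep E U T₀ := by
    intro U
    have hUsep : IsWeakBalSep E U U := by
      intro v hv
      simp at hv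
    have hne : {c : ℕ | ∃ S' : Finset V, S'.card ≤ c ∧ IsWeakBalSep E U S'}.Nonempty :=
      ⟨U.card, U, le_refl _, hUsep⟩
    obtain ⟨T₀, hT₀c, hT₀sep⟩ := Nat.sInf_mem hne
    have hle : minWeakSep E U ≤ k := by
      rw [← hk, snum]
      exact Finset.le_sup (Finset.mem_powerset.mpr (Finset.subset_univ U))
    exact ⟨T₀, le_trans hT₀c hle, hT₀sep⟩
  have huniv_ne : (Finset.univ : Finset V).Nonempty := by
    rw [← Finset.card_pos, Finset.card_univ]
    omega
  have h3 := crk_le_DD hloopfree k hk1 hks (Fintype.card V) Finset.univ huniv_ne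
    (le_of_eq Finset.card_univ)
  have h4 : DD k (Fintype.card V)
      ≤ (k:ℝ) * Real.logb 2 ((Fintype.card V : ℝ)/(k:ℝ)) - 1 + k := by
    have hk0 : (k:ℝ) ≠ 0 := by
      have : (0:ℝ) < k := by exact_mod_cast hk1
      linarith
    rw [DD]
    split_ifs with h
    · have hek : Fintype.card V = k := le_antisymm h hkn
      rw [hek, div_self hk0, Real.logb_one]
      have : ((k:ℕ):ℝ) = (k:ℝ) := rfl
      linarith
    · linarith
  refine ⟨h1, hdpw_le, ?_⟩
  rw [hcrank]
  calc ((crk E Finset.univ : ℕ) : ℝ) ≤ DD k (Fintype.card V) := h3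
    _ ≤ _ := h4
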